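/- For every integer r ≥ 3 there exists n₀ ∈ ℕ such that for all n ≥ n₀ the following holds. Let δ = 1/(34·log₂ n), let ξ be a real number with 0 < ξ < (log₂ r − 1)·n^{−1/3}·log₂ n + δ, and let A ⊆ [n] with |A| = (1 − ξ)n. Let I₀ ⊆ A with 1 ≤ |I₀| ≤ 2δn, and let x ∈ I₀. Then the number of ordered pairs (a, b) ∈ (A \ I₀)² with a < b such that {a, b, x} forms a 3-AP in [n] is at least n/5. -/

import Mathlib

/-- The set `{a, b, x}` forms a 3-AP in `[n]`: some ordering of `a, b, x` is a
triple `(u, u+d, u+2d)` with `d ≥ 1` and all three elements in `[n]`. -/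
def FormsAP3 (n a b x : ℕ) : Prop :=
  ∃ u d : ℕ, 0 < d ∧ 1 ≤ u ∧ u + 2 * d ≤ n ∧
    ({a, b, x} : Set ℕ) = {u, u + d, u + 2 * d}

set_option maxHeartbeats 2000000 in
theorem stmt_16 (r : ℕ) (hr : 3 ≤ r) :
    ∃ n₀ : ℕ, ∀ n : ℕ, n₀ ≤ n → ∀ δ ξ : ℝ, δ = 1 / (34 * Real.logb 2 n) →
      0 < ξ → ξ < (Real.logb 2 r - 1) * (n : ℝ) ^ (-(1/3 : ℝ)) * Real.logb 2 n + δ →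
      ∀ A : Finset ℕ, A ⊆ Finset.Icc 1 n → (A.card : ℝ) = (1 - ξ) * n →
      ∀ I₀ : Finset ℕ, I₀ ⊆ A → 1 ≤ I₀.card → (I₀.card : ℝ) ≤ 2 * δ * n →
      ∀ x ∈ I₀,
        (n : ℝ) / 5 ≤ (Nat.card {p : ℕ × ℕ //
          p.1 ∈ A \ I₀ ∧ p.2 ∈ A \ I₀ ∧ p.1 < p.2 ∧ FormsAP3 n p.1 p.2 x} : ℝ) := by
  refine ⟨(360*r)^6 + 256, ?_⟩
  intro n hn δ ξ hδ hξ0 hξ A hA hAcard I₀ hI₀A hI₀1 hI₀2 x hx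
  have hn256 : 256 ≤ n := by omega
  have hnR : (256:ℝ) ≤ (n:ℝ) := by exact_mod_cast hn256
  have hnpos : (0:ℝ) < n := by linarith
  -- log bounds
  have hlogn8 : (8:ℝ) ≤ Real.logb 2 n := by
    have h256 : Real.logb 2 256 = 8 := by
      have : (256:ℝ) = 2^(8:ℕ) := by norm_num
      rw [this, Real.logb_pow]; simp [Real.logb_self_eq_one]
    rw [← h256, Real.logb_le_logb one_lt_two (by norm_num) hnpos]
    exact hnR
  have hlogn0 : (0:ℝ) < Real.logb 2 n := by linarith
  have hδval : δ ≤ 1/272 := by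
    rw [hδ]
    rw [div_le_div_iff₀ (by linarith) (by norm_num)]
    linarith
  have hδpos : 0 < δ := by rw [hδ]; positivity
  -- bound on P = n^(1/6)
  set P : ℝ := (n:ℝ) ^ (1/6 : ℝ) with hPdef
  have hP0 : 0 < P := Real.rpow_pos_of_pos hnpos _
  have hP : 360 * (r:ℝ) ≤ P := by
    have h1 : ((360 * r : ℕ)^6 : ℝ) ≤ (n:ℝ) := by
      have : (360*r)^6 ≤ n := by omega
      exact_mod_cast this
    have h2 : ((360 * (r:ℝ))^(6:ℕ)) ^ ((1:ℝ)/6) ≤ P := by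
      apply Real.rpow_le_rpow (by positivity) _ (by norm_num)
      · push_cast at h1 ⊢; exact h1
    calc 360 * (r:ℝ) = ((360 * (r:ℝ))^(6:ℕ)) ^ ((1:ℝ)/6) := by
            rw [← Real.rpow_natCast (360 * (r:ℝ)) 6, ← Real.rpow_mul (by positivity)]
            norm_num
      _ ≤ P := h2
  -- logb 2 n ≤ 9 P
  have hlogn_le : Real.logb 2 n ≤ 9 * P := by
    have h1 : Real.log n ≤ (n:ℝ)^(1/6:ℝ) / (1/6) := Real.log_le_rpow_div hnpos.le (by norm_num)
    have hlog2 : (0.6931471803:ℝ) < Real.log 2 := Real.log_two_gt_d9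
    rw [Real.logb, div_le_iff₀ (by linarith)]
    have : (n:ℝ)^(1/6:ℝ) / (1/6) = 6 * P := by rw [hPdef]; ring
    rw [this] at h1
    nlinarith [hP0]
  -- rpow identity
  have hsplit : (n:ℝ)^(-(1/3:ℝ)) = (P*P)⁻¹ := by
    rw [hPdef, ← Real.rpow_add hnpos, ← Real.rpow_neg hnpos.le]
    norm_num
  -- logb 2 r bounds
  have hrR : (3:ℝ) ≤ (r:ℝ) := by exact_mod_cast hr
  have hlogr_le : Real.logb 2 r ≤ r := by
    rw [Real.logb_le_iff_le_rpow one_lt_two (by linarith)]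
    rw [Real.rpow_natCast]
    exact_mod_cast (Nat.lt_two_pow_self (n := r)).le
  have hlogr_ge : (1:ℝ) ≤ Real.logb 2 r := by
    have : Real.logb 2 2 = 1 := Real.logb_self_eq_one one_lt_two
    rw [← this, Real.logb_le_logb one_lt_two (by norm_num) (by linarith)]
    linarith
  -- main bound: L ≤ 1/40
  have hL : (Real.logb 2 r - 1) * (n : ℝ) ^ (-(1/3 : ℝ)) * Real.logb 2 n ≤ 1/40 := by
    rw [hsplit]
    have hstep : (Real.logb 2 r - 1) * (P*P)⁻¹ * Real.logb 2 n ≤ (r:ℝ) * (P*P)⁻¹ * (9*P) := by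
      apply mul_le_mul
      · apply mul_le_mul (by linarith) le_rfl (by positivity) (by linarith)
      · exact hlogn_le
      · exact hlogn0.le
      · positivity
    have heq : (r:ℝ) * (P*P)⁻¹ * (9*P) = 9 * r / P := by
      field_simp
    rw [heq] at hstep
    have hfin : 9 * (r:ℝ) / P ≤ 1/40 := by
      rw [div_le_div_iff₀ hP0 (by norm_num)]
      nlinarith
    linarith
  have hξsmall : ξ + 2*δ ≤ 1/20 := by
    linarith
  -- Finset setup
  have hxA : x ∈ A := hI₀A hx
  have hxI : x ∈ Finset.Icc 1 n := hA hxA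
  obtain ⟨hx1, hxn⟩ := Finset.mem_Icc.mp hxI
  set B : Finset ℕ := A \ I₀ with hBdef
  set C : Finset ℕ := (Finset.Icc 1 n) \ B with hCdef
  have hBsub : B ⊆ Finset.Icc 1 n := fun y hy => hA (Finset.mem_sdiff.mp hy).1
  have hBcard : B.card = A.card - I₀.card := Finset.card_sdiff_of_subset hI₀A
  have hI₀le : I₀.card ≤ A.card := Finset.card_le_card hI₀A
  have hAle : A.card ≤ n := by
    have := Finset.card_le_card hA
    simpa using this
  have hCcard : C.card = n - B.card := by
    rw [hCdef, Finset.card_sdiff_of_subset hBsub, Nat.card_Icc]; omega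
  have hCreal : (C.card : ℝ) ≤ (ξ + 2*δ) * n := by
    have hBn : B.card ≤ n := le_trans (Finset.card_le_card hBsub) (by simp [Nat.card_Icc])
    have h1 : (C.card : ℝ) = (n:ℝ) - B.card := by
      rw [hCcard]; push_cast [Nat.cast_sub hBn]; ring
    have h2 : (B.card : ℝ) = (A.card:ℝ) - I₀.card := by
      rw [hBcard]; push_cast [Nat.cast_sub hI₀le]; ring
    rw [h1, h2, hAcard]
    linarith
  have hC20 : (C.card : ℝ) ≤ (n:ℝ)/20 := by
    calc (C.card : ℝ) ≤ (ξ + 2*δ) * n := hCreal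
      _ ≤ (1/20) * n := mul_le_mul_of_nonneg_right hξsmall hnpos.le
      _ = (n:ℝ)/20 := by ring
  -- index bounds
  set m1 : ℕ := (n - x)/2 with hm1
  set m2 : ℕ := (x - 1)/2 with hm2
  set D1 : Finset ℕ := (Finset.Icc 1 m1).filter (fun d => x + d ∈ B ∧ x + 2*d ∈ B) with hD1
  set D2 : Finset ℕ := (Finset.Icc 1 m2).filter (fun d => x - 2*d ∈ B ∧ x - d ∈ B) with hD2
  -- auxiliary: bad counts
  have hbad : ∀ (f : ℕ → ℕ) (m : ℕ), (∀ d, 1 ≤ d → d ≤ m → f d ∈ Finset.Icc 1 n) →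
      (∀ d₁ d₂, f d₁ = f d₂ → d₁ = d₂) →
      ((Finset.Icc 1 m).filter (fun d => f d ∉ B)).card ≤ C.card := by
    intro f m hmem hinj
    apply Finset.card_le_card_of_injOn f
    · intro d hd
      rw [Finset.mem_coe, Finset.mem_filter, Finset.mem_Icc] at hd
      rw [Finset.mem_coe, hCdef, Finset.mem_sdiff]
      exact ⟨hmem d hd.1.1 hd.1.2, hd.2⟩
    · intro d₁ _ d₂ _ h; exact hinj _ _ h
  have hsubIcc1 : Finset.Icc 1 m1 ⊆ D1 ∪
      ((Finset.Icc 1 m1).filter (fun d => x + d ∉ B)) ∪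
      ((Finset.Icc 1 m1).filter (fun d => x + 2*d ∉ B)) := by
    intro d hd
    simp only [hD1, Finset.mem_union, Finset.mem_filter]
    by_cases h1 : x + d ∈ B <;> by_cases h2 : x + 2*d ∈ B <;> tauto
  have hD1card : m1 ≤ D1.card + 2 * C.card := by
    have hb1 : ((Finset.Icc 1 m1).filter (fun d => x + d ∉ B)).card ≤ C.card := by
      apply hbad
      · intro d hd1 hd2; rw [Finset.mem_Icc]; constructor <;> omega
      · intro d₁ d₂ h; omega
    have hb2 : ((Finset.Icc 1 m1).filter (fun d => x + 2*d ∉ B)).card ≤ C.card := by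
      apply hbad
      · intro d hd1 hd2; rw [Finset.mem_Icc]; constructor <;> omega
      · intro d₁ d₂ h; omega
    have h1 := Finset.card_le_card hsubIcc1
    have h2 := Finset.card_union_le (D1 ∪
      ((Finset.Icc 1 m1).filter (fun d => x + d ∉ B)))
      ((Finset.Icc 1 m1).filter (fun d => x + 2*d ∉ B))
    have h3 := Finset.card_union_le D1
      ((Finset.Icc 1 m1).filter (fun d => x + d ∉ B))
    have hIcc : (Finset.Icc 1 m1).card = m1 := by rw [Nat.card_Icc]; omega
    omega
  have hsubIcc2 : Finset.Icc 1 m2 ⊆ D2 ∪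
      ((Finset.Icc 1 m2).filter (fun d => x - 2*d ∉ B)) ∪
      ((Finset.Icc 1 m2).filter (fun d => x - d ∉ B)) := by
    intro d hd
    simp only [hD2, Finset.mem_union, Finset.mem_filter]
    by_cases h1 : x - 2*d ∈ B <;> by_cases h2 : x - d ∈ B <;> tauto
  have hD2card : m2 ≤ D2.card + 2 * C.card := by
    have hb1 : ((Finset.Icc 1 m2).filter (fun d => x - 2*d ∉ B)).card ≤ C.card := by
      apply Finset.card_le_card_of_injOn (fun d => x - 2*d)
      · intro d hd
        rw [Finset.mem_coe, Finset.mem_filter, Finset.mem_Icc] at hd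
        rw [Finset.mem_coe, hCdef, Finset.mem_sdiff, Finset.mem_Icc]
        beta_reduce
        refine ⟨⟨by omega, by omega⟩, hd.2⟩
      · intro d₁ h₁ d₂ h₂ h
        simp only [Finset.coe_filter, Set.mem_setOf_eq, Finset.mem_Icc] at h₁ h₂
        have h' : x - 2*d₁ = x - 2*d₂ := h
        omega
    have hb2 : ((Finset.Icc 1 m2).filter (fun d => x - d ∉ B)).card ≤ C.card := by
      apply Finset.card_le_card_of_injOn (fun d => x - d)
      · intro d hd
        rw [Finset.mem_coe, Finset.mem_filter, Finset.mem_Icc] at hd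
        rw [Finset.mem_coe, hCdef, Finset.mem_sdiff, Finset.mem_Icc]
        beta_reduce
        refine ⟨⟨by omega, by omega⟩, hd.2⟩
      · intro d₁ h₁ d₂ h₂ h
        simp only [Finset.coe_filter, Set.mem_setOf_eq, Finset.mem_Icc] at h₁ h₂
        have h' : x - d₁ = x - d₂ := h
        omega
    have h1 := Finset.card_le_card hsubIcc2
    have h2 := Finset.card_union_le (D2 ∪
      ((Finset.Icc 1 m2).filter (fun d => x - 2*d ∉ B)))
      ((Finset.Icc 1 m2).filter (fun d => x - d ∉ B))
    have h3 := Finset.card_union_le D2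
      ((Finset.Icc 1 m2).filter (fun d => x - 2*d ∉ B))
    have hIcc : (Finset.Icc 1 m2).card = m2 := by rw [Nat.card_Icc]; omega
    omega
  -- the pair set
  set T : Finset (ℕ × ℕ) := (D1.image (fun d => (x + d, x + 2*d))) ∪
      (D2.image (fun d => (x - 2*d, x - d))) with hT
  have hTcard : T.card = D1.card + D2.card := by
    rw [hT, Finset.card_union_of_disjoint, Finset.card_image_of_injOn,
        Finset.card_image_of_injOn]
    · intro d₁ h₁ d₂ h₂ h
      simp only [hD2, Finset.coe_filter, Set.mem_setOf_eq, Finset.mem_Icc] at h₁ h₂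
      have h' : (x - 2*d₁, x - d₁) = (x - 2*d₂, x - d₂) := h
      have h'' := (Prod.mk.injEq _ _ _ _).mp h'
      omega
    · intro d₁ _ d₂ _ h
      have h' : (x + d₁, x + 2*d₁) = (x + d₂, x + 2*d₂) := h
      have h'' := (Prod.mk.injEq _ _ _ _).mp h'
      omega
    · rw [Finset.disjoint_left]
      intro p hp1 hp2
      rw [Finset.mem_image] at hp1 hp2
      obtain ⟨d₁, hd₁, he₁⟩ := hp1
      obtain ⟨d₂, hd₂, he₂⟩ := hp2
      rw [hD1, Finset.mem_filter, Finset.mem_Icc] at hd₁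
      rw [hD2, Finset.mem_filter, Finset.mem_Icc] at hd₂
      have h1 : p.1 = x + d₁ := by rw [← he₁]
      have h2 : p.1 = x - 2*d₂ := by rw [← he₂]
      omega
  -- membership in the target set
  have hTS : ↑T ⊆ {p : ℕ × ℕ |
      p.1 ∈ A \ I₀ ∧ p.2 ∈ A \ I₀ ∧ p.1 < p.2 ∧ FormsAP3 n p.1 p.2 x} := by
    intro p hp
    rw [Finset.mem_coe, hT, Finset.mem_union, Finset.mem_image, Finset.mem_image] at hp
    simp only [Set.mem_setOf_eq]
    rcases hp with ⟨d, hd, he⟩ | ⟨d, hd, he⟩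
    · rw [hD1, Finset.mem_filter, Finset.mem_Icc] at hd
      obtain ⟨⟨hd1, hd2⟩, hB1, hB2⟩ := hd
      subst he
      refine ⟨hB1, hB2, by omega, x, d, by omega, by omega, by omega, ?_⟩
      ext y
      simp only [Set.mem_insert_iff, Set.mem_singleton_iff]
      tauto
    · rw [hD2, Finset.mem_filter, Finset.mem_Icc] at hd
      obtain ⟨⟨hd1, hd2⟩, hB1, hB2⟩ := hd
      subst he
      have h2d : 2*d + 1 ≤ x := by omega
      refine ⟨hB1, hB2, by omega, x - 2*d, d, by omega, by omega, by omega, ?_⟩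
      have e1 : x - 2*d + d = x - d := by omega
      have e2 : x - 2*d + 2*d = x := by omega
      rw [e1, e2]
  have hSfin : ({p : ℕ × ℕ |
      p.1 ∈ A \ I₀ ∧ p.2 ∈ A \ I₀ ∧ p.1 < p.2 ∧ FormsAP3 n p.1 p.2 x}).Finite := by
    apply Set.Finite.subset (Finset.finite_toSet ((A \ I₀) ×ˢ (A \ I₀)))
    intro p hp
    rw [Finset.coe_product]
    exact ⟨hp.1, hp.2.1⟩
  have hcount : T.card ≤ Nat.card {p : ℕ × ℕ //
      p.1 ∈ A \ I₀ ∧ p.2 ∈ A \ I₀ ∧ p.1 < p.2 ∧ FormsAP3 n p.1 p.2 x} := by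
    have h1 : Nat.card {p : ℕ × ℕ //
        p.1 ∈ A \ I₀ ∧ p.2 ∈ A \ I₀ ∧ p.1 < p.2 ∧ FormsAP3 n p.1 p.2 x} =
        ({p : ℕ × ℕ |
        p.1 ∈ A \ I₀ ∧ p.2 ∈ A \ I₀ ∧ p.1 < p.2 ∧ FormsAP3 n p.1 p.2 x}).ncard :=
      Nat.card_coe_set_eq _
    rw [h1, ← Set.ncard_coe_finset T]
    exact Set.ncard_le_ncard hTS hSfin
  -- final arithmetic
  have hm1R : (n:ℝ) ≤ 2*(m1:ℝ) + (x:ℝ) + 1 := by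
    have : n ≤ 2*m1 + x + 1 := by omega
    exact_mod_cast this
  have hm2R : (x:ℝ) ≤ 2*(m2:ℝ) + 2 := by
    have : x ≤ 2*m2 + 2 := by omega
    exact_mod_cast this
  have hD1R : (m1:ℝ) ≤ (D1.card:ℝ) + 2*(C.card:ℝ) := by exact_mod_cast hD1card
  have hD2R : (m2:ℝ) ≤ (D2.card:ℝ) + 2*(C.card:ℝ) := by exact_mod_cast hD2card
  have hTR : (T.card:ℝ) = (D1.card:ℝ) + (D2.card:ℝ) := by exact_mod_cast hTcard
  have hfinal : (n:ℝ)/5 ≤ (T.card:ℝ) := by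
    rw [hTR]
    linarith
  calc (n:ℝ)/5 ≤ (T.card:ℝ) := hfinal
    _ ≤ _ := by exact_mod_cast hcount
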